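/- Let a_1,...,a_n be real numbers with sum zero. Equality ∑ a_i^3 = ((n-2)/√(n(n-1))) · (∑ a_i^2)^(3/2) holds if and only if n−1 of the a_i are non-positive and equal to each other. -/

import Mathlib

private lemma rpow_three_halves_of_sq (u : ℝ) (hu : 0 ≤ u) :
    (u ^ 2 : ℝ) ^ ((3 : ℝ) / 2) = u ^ 3 := by
  rw [← Real.rpow_natCast u 2, ← Real.rpow_mul hu,
    show ((2 : ℕ) : ℝ) * (3 / 2) = ((3 : ℕ) : ℝ) by norm_num,
    Real.rpow_natCast]

set_option maxHeartbeats 2000000 in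
theorem sum_cubes_eq_iff (n : ℕ) (hn : 2 ≤ n) (a : Fin n → ℝ)
    (hsum : ∑ i, a i = 0) :
    (∑ i, (a i)^3 = (((n : ℝ) - 2) / Real.sqrt (n * (n - 1))) *
        (∑ i, (a i)^2) ^ ((3 : ℝ) / 2)) ↔
      ∃ (j : Fin n) (c : ℝ), c ≤ 0 ∧ ∀ i, i ≠ j → a i = c := by
  have hn2 : (2 : ℝ) ≤ (n : ℝ) := by exact_mod_cast hn
  set S : ℝ := ∑ i, (a i)^2 with hSdef
  have hS0 : 0 ≤ S := Finset.sum_nonneg fun i _ => sq_nonneg _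
  set u : ℝ := Real.sqrt S with hudef
  have hu0 : 0 ≤ u := Real.sqrt_nonneg _
  have huS : u ^ 2 = S := Real.sq_sqrt hS0
  set w : ℝ := Real.sqrt (n * (n - 1)) with hwdef
  have hwpos : 0 < w := Real.sqrt_pos.mpr (by nlinarith)
  have hw2 : w ^ 2 = n * (n - 1) := Real.sq_sqrt (by nlinarith)
  have hwne : w ≠ 0 := ne_of_gt hwpos
  have hrpow : S ^ ((3 : ℝ) / 2) = u ^ 3 := by
    rw [← huS]; exact rpow_three_halves_of_sq u hu0
  rw [hrpow]
  constructor
  · intro heq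
    by_cases hSz : S = 0
    · -- all a i = 0
      have hzero : ∀ i, a i = 0 := by
        intro i
        have := (Finset.sum_eq_zero_iff_of_nonneg
          (fun i _ => sq_nonneg (a i))).mp hSz i (Finset.mem_univ i)
        exact pow_eq_zero_iff (n := 2) (by norm_num) |>.mp this
      exact ⟨⟨0, by omega⟩, 0, le_refl 0, fun i _ => hzero i⟩
    · have hSpos : 0 < S := lt_of_le_of_ne hS0 (Ne.symm hSz)
      have hupos : 0 < u := Real.sqrt_pos.mpr hSpos
      set t : ℝ := u / w with htdef
      set M : ℝ := ((n : ℝ) - 1) * t with hMdef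
      have htpos : 0 < t := div_pos hupos hwpos
      have hMpos : 0 < M := mul_pos (by linarith) htpos
      have hu_t : u = t * w := by rw [htdef]; field_simp
      have ht2 : t ^ 2 * ((n : ℝ) * ((n : ℝ) - 1)) = S := by
        rw [htdef, div_pow, ← hw2,
          div_mul_cancel₀ _ (pow_ne_zero 2 hwne), huS]
      -- each a i ≤ M
      have hle : ∀ i, a i ≤ M := by
        intro i
        have hcs := sq_sum_le_card_mul_sum_sq
          (s := Finset.univ.erase i) (f := a)
        have hcard : (Finset.univ.erase i).card = n - 1 := by
          rw [Finset.card_erase_of_mem (Finset.mem_univ i), Finset.card_univ,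
            Fintype.card_fin]
        have hsum' : ∑ j ∈ Finset.univ.erase i, a j = -(a i) := by
          have h := Finset.add_sum_erase Finset.univ a (Finset.mem_univ i)
          rw [hsum] at h
          linarith
        have hsq' : ∑ j ∈ Finset.univ.erase i, (a j) ^ 2 = S - (a i) ^ 2 := by
          have h := Finset.add_sum_erase Finset.univ (fun j => (a j)^2)
            (Finset.mem_univ i)
          simp only [← hSdef] at h
          linarith
        rw [hsum', hsq', hcard] at hcs
        have hcast : ((n - 1 : ℕ) : ℝ) = (n : ℝ) - 1 := by
          have h1 : (1:ℕ) ≤ n := by omega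
          push_cast [h1]; ring
        rw [hcast] at hcs
        have hai2 : (n : ℝ) * (a i) ^ 2 ≤ ((n : ℝ) - 1) * S := by nlinarith
        have hM2 : (n : ℝ) * M ^ 2 = ((n : ℝ) - 1) * S := by
          rw [hMdef]
          linear_combination ((n : ℝ) - 1) * ht2
        have hsq : (a i) ^ 2 ≤ M ^ 2 := by nlinarith [hai2, hM2]
        nlinarith [hsq, hMpos, sq_nonneg (a i - M)]
      -- the key sum is zero
      have hkey : ∑ i, (M - a i) * (a i + t) ^ 2 = 0 := by
        have step : ∑ i, (M - a i) * (a i + t) ^ 2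
            = -(∑ i, (a i)^3) + (M - 2*t) * S + (2*M*t - t^2) * (∑ i, a i)
              + (n : ℝ) * (M * t^2) := by
          rw [hSdef, Finset.mul_sum, Finset.mul_sum, ← Finset.sum_neg_distrib,
            ← Finset.sum_add_distrib, ← Finset.sum_add_distrib]
          rw [show ((n : ℝ) * (M * t^2)) = ∑ _i : Fin n, M * t^2 by
            rw [Finset.sum_const, Finset.card_univ, Fintype.card_fin, nsmul_eq_mul]]
          rw [← Finset.sum_add_distrib]
          exact Finset.sum_congr rfl fun i _ => by ring
        have heq2 : ∑ i, (a i)^3 = ((n:ℝ) - 2) * t^3 * w^2 := by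
          rw [heq, hu_t]
          field_simp
        rw [step, hsum, heq2, hMdef, ← ht2]
        linear_combination (-(((n:ℝ) - 2) * t^3)) * hw2
      have hnn : ∀ i ∈ Finset.univ, 0 ≤ (M - a i) * (a i + t) ^ 2 :=
        fun i _ => mul_nonneg (by linarith [hle i]) (sq_nonneg _)
      have hterm : ∀ i, (M - a i) * (a i + t) ^ 2 = 0 := fun i =>
        (Finset.sum_eq_zero_iff_of_nonneg hnn).mp hkey i (Finset.mem_univ i)
      have hdich : ∀ i, a i = M ∨ a i = -t := by
        intro i
        rcases mul_eq_zero.mp (hterm i) with h | h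
        · left; linarith
        · right
          have h2 := pow_eq_zero_iff (n := 2) (by norm_num) |>.mp h
          linarith
      -- counting
      set T : Finset (Fin n) := Finset.univ.filter (fun i => a i = M) with hTdef
      have hTeq : ∀ i ∈ T, a i = M := fun i hi => (Finset.mem_filter.mp hi).2
      have hTcardle : T.card ≤ n := by
        have := Finset.card_le_card (Finset.subset_univ T)
        simpa using this
      have hsplit : (T.card : ℝ) * M + ((n : ℝ) - T.card) * (-t) = 0 := by
        have h1 : ∑ i ∈ T, a i = (T.card : ℝ) * M := by
          rw [Finset.sum_congr rfl hTeq, Finset.sum_const, nsmul_eq_mul]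
        have h2 : ∑ i ∈ Finset.univ \ T, a i
            = ((Finset.univ \ T).card : ℝ) * (-t) := by
          rw [Finset.sum_congr rfl (fun i hi => ?_), Finset.sum_const,
            nsmul_eq_mul]
          rcases hdich i with h | h
          · exact absurd (Finset.mem_filter.mpr ⟨Finset.mem_univ i, h⟩)
              (Finset.mem_sdiff.mp hi).2
          · exact h
        have h3 : ((Finset.univ \ T).card : ℝ) = (n : ℝ) - T.card := by
          rw [Finset.card_sdiff_of_subset (Finset.subset_univ T), Finset.card_univ,
            Fintype.card_fin]
          push_cast [hTcardle]
          ring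
        have h4 := Finset.sum_sdiff (Finset.subset_univ T) (f := a)
        rw [hsum] at h4
        rw [h3] at h2
        linarith
      have hcardT : T.card = 1 := by
        have h5 : ((T.card : ℝ) * ((n:ℝ) - 1) - ((n:ℝ) - T.card)) * t = 0 := by
          rw [hMdef] at hsplit
          linear_combination hsplit
        have h6 : (T.card : ℝ) * ((n:ℝ) - 1) - ((n:ℝ) - T.card) = 0 := by
          rcases mul_eq_zero.mp h5 with h | h
          · exact h
          · exact absurd h (ne_of_gt htpos)
        have h7 : ((T.card : ℝ) - 1) * (n : ℝ) = 0 := by linear_combination h6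
        have h8 : (T.card : ℝ) = 1 := by
          rcases mul_eq_zero.mp h7 with h | h
          · linarith
          · exfalso; have : (0:ℝ) < n := by linarith
            exact absurd h (ne_of_gt this)
        exact_mod_cast h8
      obtain ⟨j, hj⟩ := Finset.card_eq_one.mp hcardT
      refine ⟨j, -t, by linarith, fun i hij => ?_⟩
      rcases hdich i with h | h
      · exfalso
        have hiT : i ∈ T := Finset.mem_filter.mpr ⟨Finset.mem_univ i, h⟩
        rw [hj, Finset.mem_singleton] at hiT
        exact hij hiT
      · exact h
  · rintro ⟨j, c, hc, hac⟩
    have hcard : (Finset.univ.erase j).card = n - 1 := by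
      rw [Finset.card_erase_of_mem (Finset.mem_univ j), Finset.card_univ,
        Fintype.card_fin]
    have hcast : ((n - 1 : ℕ) : ℝ) = (n : ℝ) - 1 := by
      have h1 : (1:ℕ) ≤ n := by omega
      push_cast [h1]; ring
    have herase : ∀ (f : ℝ → ℝ), ∑ i ∈ Finset.univ.erase j, f (a i)
        = ((n : ℝ) - 1) * f c := by
      intro f
      rw [Finset.sum_congr rfl (fun i hi => by
        rw [hac i (Finset.mem_erase.mp hi).1]), Finset.sum_const, hcard,
        nsmul_eq_mul, hcast]
    have haj : a j = -(((n : ℝ) - 1) * c) := by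
      have h1 := Finset.add_sum_erase Finset.univ a (Finset.mem_univ j)
      have h2 := herase id
      simp only [id] at h2
      rw [hsum] at h1
      linarith
    have hS : S = (n : ℝ) * ((n : ℝ) - 1) * c ^ 2 := by
      rw [hSdef, ← Finset.add_sum_erase Finset.univ (fun i => (a i)^2)
        (Finset.mem_univ j), herase (fun x => x ^ 2), haj]
      ring
    have hcube : ∑ i, (a i)^3 = -((n:ℝ) * ((n:ℝ) - 1) * ((n:ℝ) - 2) * c ^ 3) := by
      rw [← Finset.add_sum_erase Finset.univ (fun i => (a i)^3)
        (Finset.mem_univ j), herase (fun x => x ^ 3), haj]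
      ring
    have hu : u = w * (-c) := by
      rw [hudef, hS, hwdef,
        show (n:ℝ) * ((n:ℝ)-1) * c^2 = ((n:ℝ) * ((n:ℝ)-1)) * c^2 by ring,
        Real.sqrt_mul (by nlinarith), Real.sqrt_sq_eq_abs, abs_of_nonpos hc]
    rw [hcube, hu]
    field_simp
    linear_combination ((n:ℝ) - 2) * c^3 * hw2
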